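/- Let f : ℝ → ℂ be a Schwartz function, c > 0, a ∈ ℝ, and P(u) a polynomial. Then for Λ > 0, Σ_{l∈ℤ} P(cl + a) f((cl + a)/Λ) = (Λ/c) ∫_ℝ P(Λu) f(u) du + O(Λ^{-k}) as Λ → +∞, for every k ∈ ℕ. -/

import Mathlib

open Real Complex MeasureTheory FourierTransform SchwartzMap

noncomputable def dil (b : ℝ) (hb : b ≠ 0) : SchwartzMap ℝ ℂ →L[ℝ] SchwartzMap ℝ ℂ :=
  compCLMOfContinuousLinearEquiv ℝ
    ((LinearEquiv.smulOfNeZero ℝ ℝ b hb).toContinuousLinearEquiv)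

lemma dil_apply (b : ℝ) (hb : b ≠ 0) (f : SchwartzMap ℝ ℂ) (x : ℝ) :
    dil b hb f x = f (b * x) := rfl

lemma fourier_scale (f : SchwartzMap ℝ ℂ) {b : ℝ} (hb : 0 < b) (ξ : ℝ) :
    𝓕 (fun x : ℝ => f (b * x)) ξ = (b⁻¹ : ℝ) • 𝓕 (⇑f) (ξ / b) := by
  have hbne : b ≠ 0 := hb.ne'
  rw [Real.fourier_real_eq_integral_exp_smul]
  have : ∀ x : ℝ, Complex.exp (↑(-2 * π * x * ξ) * Complex.I) • f (b * x)
      = (fun y : ℝ => Complex.exp (↑(-2 * π * y * (ξ / b)) * Complex.I) • f y) (b * x) := by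
    intro x
    simp only
    rw [show (-2 * π * x * ξ : ℝ) = -2 * π * (b * x) * (ξ / b) by
      field_simp]
  rw [integral_congr_ae (Filter.Eventually.of_forall this),
    MeasureTheory.Measure.integral_comp_mul_left
      (fun y : ℝ => Complex.exp (↑(-2 * π * y * (ξ / b)) * Complex.I) • f y) b]
  rw [_root_.abs_of_nonneg (inv_nonneg.2 hb.le)]
  congr 1
  rw [Real.fourier_real_eq_integral_exp_smul]

lemma fourier_at_zero (f : SchwartzMap ℝ ℂ) : 𝓕 (⇑f) 0 = ∫ u : ℝ, f u := by
  rw [Real.fourier_real_eq]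
  simp

noncomputable def Sconst : ℝ := ∑' n : ℤ, 1 / (n : ℝ) ^ 2

lemma Ssummable : Summable (fun n : ℤ => 1 / (n : ℝ) ^ 2) :=
  summable_one_div_int_pow.mpr one_lt_two

lemma core (c a : ℝ) (hc : 0 < c) (m : ℕ) (h : SchwartzMap ℝ ℂ) (D : ℝ)
    (hD : ∀ ξ : ℝ, |ξ| ^ (m + 2) * ‖𝓕 (⇑h) ξ‖ ≤ D) :
    ∀ Λ : ℝ, 1 ≤ Λ →
      ‖(∑' l : ℤ, h ((c * l + a) / Λ)) - ((Λ : ℂ) / c) * ∫ u : ℝ, h u‖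
        ≤ c ^ (m + 1) * Sconst * D / Λ ^ (m + 1) := by
  intro Λ hΛ
  have hΛ0 : (0 : ℝ) < Λ := lt_of_lt_of_le one_pos hΛ
  set b : ℝ := c / Λ with hbdef
  have hb : 0 < b := div_pos hc hΛ0
  set H : SchwartzMap ℝ ℂ := dil b hb.ne' h with hH
  have hD0 : 0 ≤ D := le_trans (by positivity) (hD 1)
  -- rewrite the sum
  have hsum : (∑' l : ℤ, h ((c * l + a) / Λ)) = ∑' l : ℤ, H ((a / c) + l) := by
    refine tsum_congr fun l => ?_
    rw [dil_apply]
    congr 1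
    rw [hbdef]
    field_simp
    ring
  -- Poisson
  have hpoisson := SchwartzMap.tsum_eq_tsum_fourier H (a / c)
  set T : ℤ → ℂ := fun n => fourierTransformCLM ℝ H n * fourier n ((a / c : ℝ) : UnitAddCircle)
    with hT
  -- scaling of Fourier transform
  have hscale : ∀ ξ : ℝ, 𝓕 (⇑H) ξ = (b⁻¹ : ℝ) • 𝓕 (⇑h) (ξ / b) := by
    intro ξ
    have : ⇑H = fun x : ℝ => h (b * x) := rfl
    rw [this, fourier_scale h hb ξ]
  have hTnorm : ∀ n : ℤ, ‖T n‖ = b⁻¹ * ‖𝓕 (⇑h) ((n : ℝ) / b)‖ := by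
    intro n
    rw [hT]
    simp only [norm_mul, fourierTransformCLM_apply, SchwartzMap.fourier_coe]
    have h1 : ‖fourier n (((a / c : ℝ)) : UnitAddCircle)‖ = 1 := Circle.norm_coe _
    rw [h1, mul_one, hscale n, norm_smul, Real.norm_eq_abs,
      _root_.abs_of_nonneg (inv_nonneg.2 hb.le)]
  -- the majorant
  set M : ℝ := D * (c ^ (m + 1) / Λ ^ (m + 1)) with hM
  have hM0 : 0 ≤ M := by positivity
  have hbound : ∀ n : ℤ, n ≠ 0 → ‖T n‖ ≤ M * (1 / (n : ℝ) ^ 2) := by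
    intro n hn
    have hn1 : (1 : ℝ) ≤ |(n : ℝ)| := by
      rw [← Int.cast_abs]
      exact_mod_cast Int.one_le_abs (by simpa using hn)
    have hnpos : (0 : ℝ) < |(n : ℝ)| := lt_of_lt_of_le one_pos hn1
    have hξ : |((n : ℝ) / b)| = |(n : ℝ)| / b := by
      rw [abs_div, _root_.abs_of_nonneg hb.le]
    have hb2 : (0 : ℝ) < b ^ (m + 2) := by positivity
    have hnp : (0 : ℝ) < |(n : ℝ)| ^ (m + 2) := by positivity
    have key : ‖𝓕 (⇑h) ((n : ℝ) / b)‖ ≤ D * b ^ (m + 2) / |(n : ℝ)| ^ (m + 2) := by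
      have h2 := hD ((n : ℝ) / b)
      rw [hξ, div_pow] at h2
      rw [le_div_iff₀ hnp]
      calc ‖𝓕 (⇑h) ((n : ℝ) / b)‖ * |(n : ℝ)| ^ (m + 2)
          = (|(n : ℝ)| ^ (m + 2) / b ^ (m + 2) * ‖𝓕 (⇑h) ((n : ℝ) / b)‖) * b ^ (m + 2) := by
            field_simp
        _ ≤ D * b ^ (m + 2) := mul_le_mul_of_nonneg_right h2 hb2.le
    rw [hTnorm n]
    have step1 : b⁻¹ * ‖𝓕 (⇑h) ((n : ℝ) / b)‖ ≤ b⁻¹ * (D * b ^ (m + 2) / |(n : ℝ)| ^ (m + 2)) :=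
      mul_le_mul_of_nonneg_left key (inv_nonneg.2 hb.le)
    refine step1.trans ?_
    have heq : b⁻¹ * (D * b ^ (m + 2) / |(n : ℝ)| ^ (m + 2))
        = D * b ^ (m + 1) / |(n : ℝ)| ^ (m + 2) := by
      rw [pow_succ _ (m + 1)]
      field_simp
    rw [heq]
    have hmono : ((n : ℝ)) ^ 2 ≤ |(n : ℝ)| ^ (m + 2) := by
      calc ((n : ℝ)) ^ 2 = |(n : ℝ)| ^ 2 := (_root_.sq_abs _).symm
        _ ≤ |(n : ℝ)| ^ (m + 2) := pow_le_pow_right₀ hn1 (by omega)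
    have hbm : b ^ (m + 1) = c ^ (m + 1) / Λ ^ (m + 1) := by rw [hbdef, div_pow]
    calc D * b ^ (m + 1) / |(n : ℝ)| ^ (m + 2)
        ≤ D * b ^ (m + 1) / ((n : ℝ)) ^ 2 := by
          have hncast : ((n : ℝ)) ≠ 0 := Int.cast_ne_zero.mpr hn
          gcongr
      _ = M * (1 / (n : ℝ) ^ 2) := by rw [hM, hbm]; ring
  -- summability
  have hmaj : Summable (fun n : ℤ => (if n = 0 then ‖T 0‖ else 0) + M * (1 / (n : ℝ) ^ 2)) := by
    refine Summable.add ?_ (Ssummable.mul_left M)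
    refine summable_of_ne_finset_zero (s := {0}) fun n hn => ?_
    simp only [Finset.mem_singleton] at hn
    simp [hn]
  have hsummable : Summable T := by
    refine Summable.of_norm_bounded hmaj fun n => ?_
    by_cases hn : n = 0
    · subst hn
      simp
    · simp only [if_neg hn, zero_add]
      exact hbound n hn
  have hT0 : T 0 = ((Λ : ℂ) / c) * ∫ u : ℝ, h u := by
    rw [hT]
    simp only [Int.cast_zero, fourierTransformCLM_apply, SchwartzMap.fourier_coe]
    rw [_root_.fourier_zero, mul_one, hscale 0, zero_div, fourier_at_zero, Complex.real_smul]
    congr 1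
    rw [hbdef]
    push_cast
    rw [inv_div]
  have hnormbound : ∀ n : ℤ, ‖(if n = 0 then 0 else T n : ℂ)‖ ≤ M * (1 / (n : ℝ) ^ 2) := by
    intro n
    by_cases hn : n = 0
    · subst hn
      simp
    · simp only [if_neg hn]
      exact hbound n hn
  have hsum2 : Summable (fun n : ℤ => ‖(if n = 0 then 0 else T n : ℂ)‖) :=
    Summable.of_nonneg_of_le (fun n => norm_nonneg _) hnormbound (Ssummable.mul_left M)
  have hmain : (∑' l : ℤ, h ((c * l + a) / Λ)) - ((Λ : ℂ) / c) * ∫ u : ℝ, h u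
      = ∑' n : ℤ, (if n = 0 then 0 else T n : ℂ) := by
    rw [hsum, hpoisson, show (∑' n : ℤ, 𝓕 H n * fourier n ((a / c : ℝ) : UnitAddCircle))
      = ∑' n, T n from rfl, Summable.tsum_eq_add_tsum_ite hsummable 0, hT0]
    ring
  rw [hmain]
  calc ‖∑' n : ℤ, (if n = 0 then 0 else T n : ℂ)‖
      ≤ ∑' n : ℤ, ‖(if n = 0 then 0 else T n : ℂ)‖ := norm_tsum_le_tsum_norm hsum2
    _ ≤ ∑' n : ℤ, M * (1 / (n : ℝ) ^ 2) := Summable.tsum_le_tsum hnormbound hsum2 (Ssummable.mul_left M)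
    _ = M * Sconst := by rw [tsum_mul_left]; rfl
    _ = c ^ (m + 1) * Sconst * D / Λ ^ (m + 1) := by rw [hM]; ring


lemma mul_schwartz (f : SchwartzMap ℝ ℂ) :
    ∃ h : SchwartzMap ℝ ℂ, ∀ u : ℝ, h u = (u : ℂ) * f u := by
  set g := (fourierTransformCLE ℂ (SchwartzMap ℝ ℂ) (F := SchwartzMap ℝ ℂ)).symm f with hg
  have hfg : 𝓕 (⇑g) = ⇑f := by
    have := (fourierTransformCLE ℂ (SchwartzMap ℝ ℂ) (F := SchwartzMap ℝ ℂ)).apply_symm_apply f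
    calc 𝓕 ⇑g = ⇑((fourierTransformCLE ℂ (SchwartzMap ℝ ℂ) (F := SchwartzMap ℝ ℂ)) g) := by rfl
    _ = ⇑f := by rw [this]
  refine ⟨((2 * π * Complex.I)⁻¹ : ℂ) • (fourierTransformCLM ℂ (derivCLM ℂ ℂ g)), fun u => ?_⟩
  have hd : 𝓕 (deriv (⇑g)) = fun x : ℝ => (2 * π * Complex.I * x) • (𝓕 ⇑g x) :=
    Real.fourier_deriv g.integrable (fun x => g.differentiableAt)
      (derivCLM ℂ ℂ g).integrable
  have : (fourierTransformCLM ℂ (derivCLM ℂ ℂ g)) u = (2 * π * Complex.I * u) • (f u) := by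
    rw [fourierTransformCLM_apply, SchwartzMap.fourier_coe]
    have h1 : 𝓕 ⇑(derivCLM ℂ ℂ g) = 𝓕 (deriv ⇑g) := rfl
    rw [h1, hd, hfg]
  rw [SchwartzMap.smul_apply, this]
  have h2 : (2 * π * Complex.I : ℂ) ≠ 0 := by
    simp [Real.pi_ne_zero, Complex.I_ne_zero]
  field_simp
  have hp : (π : ℂ) * (π : ℂ)⁻¹ = 1 := mul_inv_cancel₀ (by exact_mod_cast Real.pi_ne_zero)
  have hI : Complex.I * Complex.I⁻¹ = 1 := mul_inv_cancel₀ Complex.I_ne_zero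
  linear_combination (f u * u * (Complex.I * Complex.I⁻¹)) * hp + (f u * u) * hI


lemma pow_mul_schwartz (j : ℕ) : ∀ f : SchwartzMap ℝ ℂ,
    ∃ h : SchwartzMap ℝ ℂ, ∀ u : ℝ, h u = (u : ℂ) ^ j * f u := by
  induction j with
  | zero => exact fun f => ⟨f, by simp⟩
  | succ n ih =>
    intro f
    obtain ⟨h₁, hh₁⟩ := mul_schwartz f
    obtain ⟨h₂, hh₂⟩ := ih h₁
    refine ⟨h₂, fun u => ?_⟩
    rw [hh₂, hh₁]
    ring

lemma schwartz_sum_apply {s : Finset ℕ} (F : ℕ → SchwartzMap ℝ ℂ) (x : ℝ) :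
    (∑ j ∈ s, F j) x = ∑ j ∈ s, F j x := by
  have := map_sum (FunLike.coeAddMonoidHom (SchwartzMap ℝ ℂ) ℝ ℂ) F s
  calc (∑ j ∈ s, F j) x = (FunLike.coeAddMonoidHom (SchwartzMap ℝ ℂ) ℝ ℂ (∑ j ∈ s, F j)) x := rfl
    _ = (∑ j ∈ s, (FunLike.coeAddMonoidHom (SchwartzMap ℝ ℂ) ℝ ℂ) (F j)) x := by rw [this]
    _ = ∑ j ∈ s, F j x := by rw [Finset.sum_apply]; rfl

/-- Let `f` be Schwartz, `c > 0`, `a ∈ ℝ`, and `P` a polynomial.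
Then for `Λ > 0`,
`Σ_{l∈ℤ} P(cl + a) f((cl + a)/Λ) = (Λ/c) ∫_ℝ P(Λu) f(u) du + O(Λ^{-k})` as `Λ → +∞`,
for every `k ∈ ℕ`. -/
theorem poisson_summation_polynomial_weight
    (f : SchwartzMap ℝ ℂ) (c a : ℝ) (hc : 0 < c) (P : Polynomial ℂ) (k : ℕ) :
    ∃ C : ℝ, ∀ Λ : ℝ, 1 ≤ Λ →
      ‖(∑' l : ℤ, P.eval ((c * l + a : ℝ) : ℂ) * f ((c * l + a) / Λ))
          - ((Λ : ℂ) / c) * ∫ u : ℝ, P.eval ((Λ * u : ℝ) : ℂ) * f u‖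
        ≤ C / Λ ^ k := by
  classical
  set d := P.natDegree with hd
  set m := k + d with hm
  -- choose the monomial-weighted Schwartz functions
  choose hj hjspec using fun j : ℕ => pow_mul_schwartz j f
  -- decay constants of their Fourier transforms
  have hDex : ∀ j : ℕ, ∃ D : ℝ, 0 < D ∧
      ∀ ξ : ℝ, |ξ| ^ (m + 2) * ‖𝓕 (⇑(hj j)) ξ‖ ≤ D := by
    intro j
    obtain ⟨D, hD0, hD⟩ := (fourierTransformCLM ℝ (hj j)).decay (m + 2) 0
    refine ⟨D, hD0, fun ξ => ?_⟩
    have := hD ξ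
    rwa [norm_iteratedFDeriv_zero, Real.norm_eq_abs, fourierTransformCLM_apply, SchwartzMap.fourier_coe] at this
  choose Dj hDjpos hDj using hDex
  set A : ℝ := ∑ j ∈ Finset.range (d + 1), ‖P.coeff j‖ * Dj j with hA
  have hA0 : 0 ≤ A := Finset.sum_nonneg fun j _ => mul_nonneg (norm_nonneg _) (hDjpos j).le
  have hS0 : 0 ≤ Sconst := tsum_nonneg fun n => by positivity
  refine ⟨c ^ (m + 1) * Sconst * A, fun Λ hΛ => ?_⟩
  have hΛ0 : (0 : ℝ) < Λ := lt_of_lt_of_le one_pos hΛ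
  -- the combined Schwartz function
  set g : SchwartzMap ℝ ℂ :=
    ∑ j ∈ Finset.range (d + 1), (P.coeff j * (Λ : ℂ) ^ j) • hj j with hg
  have hgval : ∀ x : ℝ, g x = P.eval ((Λ * x : ℝ) : ℂ) * f x := by
    intro x
    rw [hg, schwartz_sum_apply, Polynomial.eval_eq_sum_range, Finset.sum_mul]
    refine Finset.sum_congr rfl fun j _ => ?_
    rw [SchwartzMap.smul_apply, hjspec j x, smul_eq_mul]
    push_cast
    ring
  -- Fourier transform bound for g
  have hgF : ∀ ξ : ℝ, |ξ| ^ (m + 2) * ‖𝓕 (⇑g) ξ‖ ≤ Λ ^ d * A := by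
    intro ξ
    have hFg : 𝓕 (⇑g) ξ = ∑ j ∈ Finset.range (d + 1),
        (P.coeff j * (Λ : ℂ) ^ j) • (𝓕 (⇑(hj j)) ξ) := by
      have h1 : fourierTransformCLM ℂ g
          = ∑ j ∈ Finset.range (d + 1),
            (P.coeff j * (Λ : ℂ) ^ j) • fourierTransformCLM ℂ (hj j) := by
        rw [hg, map_sum]
        refine Finset.sum_congr rfl fun j _ => ?_
        rw [_root_.map_smul]
      calc 𝓕 (⇑g) ξ = (fourierTransformCLM ℂ g) ξ := by rw [fourierTransformCLM_apply, SchwartzMap.fourier_coe]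
        _ = ∑ j ∈ Finset.range (d + 1),
            ((P.coeff j * (Λ : ℂ) ^ j) • fourierTransformCLM ℂ (hj j)) ξ := by
            rw [h1]
            exact schwartz_sum_apply _ ξ
        _ = ∑ j ∈ Finset.range (d + 1),
            (P.coeff j * (Λ : ℂ) ^ j) • (𝓕 (⇑(hj j)) ξ) := by
            refine Finset.sum_congr rfl fun j _ => ?_
            rw [SchwartzMap.smul_apply, fourierTransformCLM_apply, SchwartzMap.fourier_coe]
    rw [hFg]
    calc |ξ| ^ (m + 2) * ‖∑ j ∈ Finset.range (d + 1),
            (P.coeff j * (Λ : ℂ) ^ j) • (𝓕 (⇑(hj j)) ξ)‖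
        ≤ |ξ| ^ (m + 2) * ∑ j ∈ Finset.range (d + 1),
            ‖(P.coeff j * (Λ : ℂ) ^ j) • (𝓕 (⇑(hj j)) ξ)‖ := by
          apply mul_le_mul_of_nonneg_left (norm_sum_le _ _) (by positivity)
      _ = ∑ j ∈ Finset.range (d + 1),
            ‖P.coeff j‖ * Λ ^ j * (|ξ| ^ (m + 2) * ‖𝓕 (⇑(hj j)) ξ‖) := by
          rw [Finset.mul_sum]
          refine Finset.sum_congr rfl fun j _ => ?_
          rw [norm_smul, norm_mul, norm_pow, Complex.norm_real, Real.norm_eq_abs,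
            _root_.abs_of_nonneg hΛ0.le]
          ring
      _ ≤ ∑ j ∈ Finset.range (d + 1), ‖P.coeff j‖ * Λ ^ d * Dj j := by
          refine Finset.sum_le_sum fun j hjmem => ?_
          have hjd : j ≤ d := by
            have := Finset.mem_range.mp hjmem; omega
          have h1 : Λ ^ j ≤ Λ ^ d := pow_le_pow_right₀ hΛ hjd
          calc ‖P.coeff j‖ * Λ ^ j * (|ξ| ^ (m + 2) * ‖𝓕 (⇑(hj j)) ξ‖)
              ≤ ‖P.coeff j‖ * Λ ^ j * Dj j := by
                apply mul_le_mul_of_nonneg_left (hDj j ξ) (by positivity)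
            _ ≤ ‖P.coeff j‖ * Λ ^ d * Dj j := by
                have := hDjpos j
                apply mul_le_mul_of_nonneg_right ?_ (hDjpos j).le
                apply mul_le_mul_of_nonneg_left h1 (norm_nonneg _)
      _ = Λ ^ d * A := by rw [hA, Finset.mul_sum]; refine Finset.sum_congr rfl fun j _ => by ring
  -- apply the core estimate
  have hcore := core c a hc m g (Λ ^ d * A) hgF Λ hΛ
  -- identify the sum and the integral
  have hsum_eq : (∑' l : ℤ, P.eval ((c * l + a : ℝ) : ℂ) * f ((c * l + a) / Λ))
      = ∑' l : ℤ, g ((c * l + a) / Λ) := by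
    refine tsum_congr fun l => ?_
    rw [hgval]
    congr 2
    rw [show Λ * ((c * l + a) / Λ) = c * l + a by field_simp]
  have hint_eq : (∫ u : ℝ, P.eval ((Λ * u : ℝ) : ℂ) * f u) = ∫ u : ℝ, g u := by
    refine integral_congr_ae (Filter.Eventually.of_forall fun u => ?_)
    rw [hgval]
  rw [hsum_eq, hint_eq]
  refine hcore.trans ?_
  -- final arithmetic
  rw [div_le_div_iff₀ (by positivity) (by positivity)]
  have hpow : Λ ^ d * Λ ^ k ≤ Λ ^ (m + 1) := by
    rw [← pow_add]
    exact pow_le_pow_right₀ hΛ (by omega)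
  calc c ^ (m + 1) * Sconst * (Λ ^ d * A) * Λ ^ k
      = (c ^ (m + 1) * Sconst * A) * (Λ ^ d * Λ ^ k) := by ring
    _ ≤ (c ^ (m + 1) * Sconst * A) * Λ ^ (m + 1) := by
        apply mul_le_mul_of_nonneg_left hpow (by positivity)
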